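/- Let Γ = {f₁, f₂, f₃} be a smooth solution of the elastic network flow ∂ₜfᵢ = −∇ₛ²κᵢ − ½|κᵢ|²κᵢ + λᵢκᵢ + φᵢ ∂ₛfᵢ on (0,T) × [0,1], with λᵢ constant, subject to the boundary conditions fᵢ(t,1) = Pᵢ, κᵢ(t,0) = κᵢ(t,1) = 0, f₁(t,0) = f₂(t,0) = f₃(t,0), and Σᵢ₌₁³ (∇ₛκᵢ(t,0) − λᵢ ∂ₛfᵢ(t,0)) = 0 for all t ∈ (0,T). Then at the triple junction x = 0 one has ∇ₛ⁴κᵢ(t,0) = λᵢ ∇ₛ²κᵢ(t,0) + φᵢ(t,0) ∇ₛκᵢ(t,0) for every t ∈ (0,T) and i = 1,2,3. -/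

import Mathlib

open Set MeasureTheory
open scoped RealInnerProductSpace

set_option maxRecDepth 4000
set_option maxHeartbeats 1000000

noncomputable section

/-- Arc-length derivative `∂ₛ g = |∂ₓ f|⁻¹ ∂ₓ g` along the curve `f`. -/
def sDeriv {n : ℕ} {F : Type*} [NormedAddCommGroup F] [NormedSpace ℝ F]
    (f : ℝ → EuclideanSpace ℝ (Fin n)) (g : ℝ → F) (x : ℝ) : F :=
  ‖deriv f x‖⁻¹ • deriv g x

/-- The unit tangent `τ = ∂ₛ f`. -/
def tau {n : ℕ} (f : ℝ → EuclideanSpace ℝ (Fin n)) : ℝ → EuclideanSpace ℝ (Fin n) :=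
  sDeriv f f

/-- The curvature vector `κ = ∂ₛ² f`. -/
def kappa {n : ℕ} (f : ℝ → EuclideanSpace ℝ (Fin n)) : ℝ → EuclideanSpace ℝ (Fin n) :=
  sDeriv f (tau f)

/-- Normal projection of the arc-length derivative: `∇ₛψ = ∂ₛψ − ⟨∂ₛψ, τ⟩ τ`. -/
def nablaS {n : ℕ} (f ψ : ℝ → EuclideanSpace ℝ (Fin n)) (x : ℝ) :
    EuclideanSpace ℝ (Fin n) :=
  sDeriv f ψ x - ⟪sDeriv f ψ x, tau f x⟫ • tau f x

/-- Iterated normal arc-length derivative `∇ₛ^m`. -/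
def nablaSIter {n : ℕ} (f : ℝ → EuclideanSpace ℝ (Fin n)) :
    ℕ → (ℝ → EuclideanSpace ℝ (Fin n)) → ℝ → EuclideanSpace ℝ (Fin n)
  | 0, ψ => ψ
  | m + 1, ψ => nablaS f (nablaSIter f m ψ)

/-- Partial time derivative of a time-dependent field. -/
def pT {F : Type*} [NormedAddCommGroup F] [NormedSpace ℝ F]
    (g : ℝ → ℝ → F) (t x : ℝ) : F :=
  deriv (fun s => g s x) t


section Helpers
variable {F : Type*} [NormedAddCommGroup F] [NormedSpace ℝ F]

/-- slice in second variable -/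
lemma hasDerivAt_fix1 (G : ℝ × ℝ → F) (p : ℝ × ℝ) (h : DifferentiableAt ℝ G p) :
    HasDerivAt (fun x => G (p.1, x)) (fderiv ℝ G p (0, 1)) p.2 := by
  have h1 : HasDerivAt (fun x : ℝ => ((p.1, x) : ℝ × ℝ)) ((0 : ℝ), (1 : ℝ)) p.2 :=
    (hasDerivAt_const _ _).prodMk (hasDerivAt_id _)
  exact h.hasFDerivAt.comp_hasDerivAt p.2 h1

lemma hasDerivAt_fix2 (G : ℝ × ℝ → F) (p : ℝ × ℝ) (h : DifferentiableAt ℝ G p) :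
    HasDerivAt (fun t => G (t, p.2)) (fderiv ℝ G p (1, 0)) p.1 := by
  have h1 : HasDerivAt (fun t : ℝ => ((t, p.2) : ℝ × ℝ)) ((1 : ℝ), (0 : ℝ)) p.1 :=
    (hasDerivAt_id _).prodMk (hasDerivAt_const _ _)
  exact h.hasFDerivAt.comp_hasDerivAt p.1 h1

lemma contDiffAt_fderiv_apply {G : ℝ × ℝ → F} {p : ℝ × ℝ} (w : ℝ × ℝ)
    (h : ContDiffAt ℝ (⊤ : ℕ∞) G p) :
    ContDiffAt ℝ (⊤ : ℕ∞) (fun q => fderiv ℝ G q w) p :=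
  (h.fderiv_right (by simp)).clm_apply contDiffAt_const

lemma fderiv_fderiv_apply {G : ℝ × ℝ → F} {p : ℝ × ℝ}
    (h : DifferentiableAt ℝ (fderiv ℝ G) p) (v w : ℝ × ℝ) :
    fderiv ℝ (fun q => fderiv ℝ G q w) p v = fderiv ℝ (fderiv ℝ G) p v w := by
  have h2 := (h.hasFDerivAt.clm_apply (hasFDerivAt_const w p)).fderiv
  rw [h2]
  simp

lemma fderiv_swap {G : ℝ × ℝ → F} {p : ℝ × ℝ} (h : ContDiffAt ℝ (⊤ : ℕ∞) G p)
    (v w : ℝ × ℝ) :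
    fderiv ℝ (fun q => fderiv ℝ G q w) p v = fderiv ℝ (fun q => fderiv ℝ G q v) p w := by
  have hd : DifferentiableAt ℝ (fderiv ℝ G) p :=
    (h.fderiv_right (m := (⊤:ℕ∞)) (by simp)).differentiableAt (by simp)
  have hsym : IsSymmSndFDerivAt ℝ G p := h.isSymmSndFDerivAt (by simp only [minSmoothness_of_isRCLikeNormedField]; exact WithTop.coe_le_coe.2 (le_top : (2:ℕ∞) ≤ ⊤))
  rw [fderiv_fderiv_apply hd, fderiv_fderiv_apply hd, hsym.eq]

lemma deriv_eqOn_Icc {g₁ g₂ : ℝ → F} (h : EqOn g₁ g₂ (Icc (0:ℝ) 1))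
    (h₁ : ∀ x ∈ Icc (0:ℝ) 1, DifferentiableAt ℝ g₁ x)
    (h₂ : ∀ x ∈ Icc (0:ℝ) 1, DifferentiableAt ℝ g₂ x) :
    ∀ x ∈ Icc (0:ℝ) 1, deriv g₁ x = deriv g₂ x := by
  intro x hx
  rw [← (h₁ x hx).derivWithin ((uniqueDiffOn_Icc one_pos) x hx),
    ← (h₂ x hx).derivWithin ((uniqueDiffOn_Icc one_pos) x hx),
    derivWithin_congr h (h hx)]

lemma contDiffAt_deriv {ψ : ℝ → F} {x : ℝ} (h : ContDiffAt ℝ (⊤ : ℕ∞) ψ x) :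
    ContDiffAt ℝ (⊤ : ℕ∞) (deriv ψ) x :=
  (h.fderiv_right (by simp)).clm_apply contDiffAt_const

lemma hasFDerivAt_inv_norm {E' : Type*} [NormedAddCommGroup E'] [InnerProductSpace ℝ E']
    {X : Type*} [NormedAddCommGroup X] [NormedSpace ℝ X]
    {v : X → E'} {p : X} (hv : DifferentiableAt ℝ v p) (h0 : v p ≠ 0) :
    HasFDerivAt (fun q => ‖v q‖⁻¹)
      ((-(‖v p‖⁻¹ ^ 3)) • ((innerSL ℝ (v p)).comp (fderiv ℝ v p))) p := by
  have h1 : ‖v p‖ ≠ 0 := norm_ne_zero_iff.2 h0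
  have hns : HasFDerivAt (fun q => ‖v q‖ ^ 2)
      (2 • ((innerSL ℝ) (v p)).comp (fderiv ℝ v p)) p := hv.hasFDerivAt.norm_sq
  have hsq : HasDerivAt Real.sqrt (1 / (2 * Real.sqrt (‖v p‖ ^ 2))) (‖v p‖ ^ 2) :=
    Real.hasDerivAt_sqrt (pow_ne_zero 2 h1)
  have hnorm : HasFDerivAt (fun q => ‖v q‖)
      ((1 / (2 * Real.sqrt (‖v p‖ ^ 2))) • (2 • ((innerSL ℝ) (v p)).comp (fderiv ℝ v p))) p := by
    have h2 := hsq.comp_hasFDerivAt p hns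
    have h3 : (Real.sqrt ∘ fun q => ‖v q‖ ^ 2) = fun q => ‖v q‖ := by
      funext q; simp [Function.comp, Real.sqrt_sq (norm_nonneg _)]
    rwa [h3] at h2
  have hinv : HasDerivAt (fun y : ℝ => y⁻¹) (-((‖v p‖ : ℝ) ^ 2)⁻¹) ‖v p‖ :=
    hasDerivAt_inv h1
  have h4 := hinv.comp_hasFDerivAt p hnorm
  have h5 : ((fun y : ℝ => y⁻¹) ∘ fun q => ‖v q‖) = fun q => ‖v q‖⁻¹ := rfl
  rw [h5] at h4
  refine h4.congr_fderiv ?_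
  ext w
  rw [← Nat.cast_smul_eq_nsmul ℝ]
  simp only [ContinuousLinearMap.smul_apply, smul_eq_mul,
    Real.sqrt_sq (norm_nonneg _), Nat.cast_ofNat]
  field_simp

end Helpers

section TwoVar

variable {n : ℕ} (g : ℝ → ℝ → EuclideanSpace ℝ (Fin n))

/-- joint velocity field -/
def jvh : ℝ × ℝ → EuclideanSpace ℝ (Fin n) :=
  fun p => fderiv ℝ (Function.uncurry g) p (0, 1)

/-- joint unit tangent -/
def jtau : ℝ × ℝ → EuclideanSpace ℝ (Fin n) :=
  fun p => ‖jvh g p‖⁻¹ • jvh g p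

def jD2tau : ℝ × ℝ → EuclideanSpace ℝ (Fin n) :=
  fun p => fderiv ℝ (jtau g) p (0, 1)

def jD1tau : ℝ × ℝ → EuclideanSpace ℝ (Fin n) :=
  fun p => fderiv ℝ (jtau g) p (1, 0)

/-- joint curvature -/
def jkap : ℝ × ℝ → EuclideanSpace ℝ (Fin n) :=
  fun p => ‖jvh g p‖⁻¹ • jD2tau g p

lemma jvh_contDiff (hg : ContDiff ℝ (⊤ : ℕ∞) (Function.uncurry g)) : ContDiff ℝ (⊤ : ℕ∞) (jvh g) :=
  (hg.fderiv_right (by simp)).clm_apply contDiff_const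

lemma deriv_eq_jvh (hg : ContDiff ℝ (⊤ : ℕ∞) (Function.uncurry g)) (t x : ℝ) : deriv (g t) x = jvh g (t, x) :=
  (hasDerivAt_fix1 (Function.uncurry g) (t, x)
    (hg.differentiable (by simp) _)).deriv

lemma tau_eq_jtau (hg : ContDiff ℝ (⊤ : ℕ∞) (Function.uncurry g)) (t : ℝ) : tau (g t) = fun x => jtau g (t, x) := by
  funext x
  show ‖deriv (g t) x‖⁻¹ • deriv (g t) x = _
  rw [deriv_eq_jvh g hg]
  rfl

lemma jtau_contDiffAt (hg : ContDiff ℝ (⊤ : ℕ∞) (Function.uncurry g)) {p : ℝ × ℝ} (hp : jvh g p ≠ 0) :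
    ContDiffAt ℝ (⊤ : ℕ∞) (jtau g) p :=
  (((jvh_contDiff g hg).contDiffAt.norm ℝ hp).inv
    (norm_ne_zero_iff.2 hp)).smul (jvh_contDiff g hg).contDiffAt

lemma jD2tau_contDiffAt (hg : ContDiff ℝ (⊤ : ℕ∞) (Function.uncurry g)) {p : ℝ × ℝ} (hp : jvh g p ≠ 0) :
    ContDiffAt ℝ (⊤ : ℕ∞) (jD2tau g) p :=
  contDiffAt_fderiv_apply _ (jtau_contDiffAt g hg hp)

lemma jD1tau_contDiffAt (hg : ContDiff ℝ (⊤ : ℕ∞) (Function.uncurry g)) {p : ℝ × ℝ} (hp : jvh g p ≠ 0) :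
    ContDiffAt ℝ (⊤ : ℕ∞) (jD1tau g) p :=
  contDiffAt_fderiv_apply _ (jtau_contDiffAt g hg hp)

lemma jkap_contDiffAt (hg : ContDiff ℝ (⊤ : ℕ∞) (Function.uncurry g)) {p : ℝ × ℝ} (hp : jvh g p ≠ 0) :
    ContDiffAt ℝ (⊤ : ℕ∞) (jkap g) p :=
  (((jvh_contDiff g hg).contDiffAt.norm ℝ hp).inv
    (norm_ne_zero_iff.2 hp)).smul (jD2tau_contDiffAt g hg hp)

lemma kappa_eq_jkap (hg : ContDiff ℝ (⊤ : ℕ∞) (Function.uncurry g)) {t x : ℝ} (hp : jvh g (t, x) ≠ 0) :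
    kappa (g t) x = jkap g (t, x) := by
  show ‖deriv (g t) x‖⁻¹ • deriv (tau (g t)) x = _
  rw [deriv_eq_jvh g hg, tau_eq_jtau g hg t]
  show _ = ‖jvh g (t,x)‖⁻¹ • jD2tau g (t,x)
  congr 1
  exact (hasDerivAt_fix1 (jtau g) (t, x)
    ((jtau_contDiffAt g hg hp).differentiableAt (by simp))).deriv

lemma pT_eq (hg : ContDiff ℝ (⊤ : ℕ∞) (Function.uncurry g)) (t x : ℝ) : pT g t x = fderiv ℝ (Function.uncurry g) (t, x) (1, 0) :=
  (hasDerivAt_fix2 (Function.uncurry g) (t, x)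
    (hg.differentiable (by simp) _)).deriv

lemma deriv_pT_eq (hg : ContDiff ℝ (⊤ : ℕ∞) (Function.uncurry g)) (t x : ℝ) :
    deriv (pT g t) x = fderiv ℝ (jvh g) (t, x) (1, 0) := by
  have h1 : pT g t = fun y => fderiv ℝ (Function.uncurry g) (t, y) (1, 0) :=
    funext fun y => pT_eq g hg t y
  have h2 : ContDiff ℝ (⊤ : ℕ∞) (fun q => fderiv ℝ (Function.uncurry g) q (1, 0)) :=
    (hg.fderiv_right (by simp)).clm_apply contDiff_const
  rw [h1]
  have h3 := (hasDerivAt_fix1 (fun q => fderiv ℝ (Function.uncurry g) q (1, 0)) (t, x)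
    (h2.differentiable (by simp) _)).deriv
  rw [h3, show jvh g = fun q => fderiv ℝ (Function.uncurry g) q (0, 1) from rfl]
  exact fderiv_swap hg.contDiffAt (0, 1) (1, 0)

lemma jD1tau_eq (hg : ContDiff ℝ (⊤ : ℕ∞) (Function.uncurry g)) {t x : ℝ} (hp : jvh g (t, x) ≠ 0) :
    jD1tau g (t, x) = nablaS (g t) (pT g t) x := by
  have hvd : DifferentiableAt ℝ (jvh g) (t, x) :=
    (jvh_contDiff g hg).differentiable (by simp) _
  have hγ := hasFDerivAt_inv_norm (v := jvh g) (p := (t, x)) hvd hp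
  have hprod := (hγ.fun_smul hvd.hasFDerivAt).fderiv
  have hlhs : jD1tau g (t, x)
      = ‖jvh g (t, x)‖⁻¹ • fderiv ℝ (jvh g) (t, x) (1, 0)
        + (-(‖jvh g (t, x)‖⁻¹ ^ 3) * ⟪jvh g (t, x), fderiv ℝ (jvh g) (t, x) (1, 0)⟫)
          • jvh g (t, x) := by
    show fderiv ℝ (fun q => ‖jvh g q‖⁻¹ • jvh g q) (t, x) (1, 0) = _
    rw [hprod]
    simp [ContinuousLinearMap.smulRight_apply]
  rw [hlhs]
  unfold nablaS sDeriv
  rw [deriv_eq_jvh g hg, deriv_pT_eq g hg, tau_eq_jtau g hg t]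
  show _ = ‖jvh g (t,x)‖⁻¹ • fderiv ℝ (jvh g) (t, x) (1, 0)
    - ⟪‖jvh g (t,x)‖⁻¹ • fderiv ℝ (jvh g) (t, x) (1, 0), jtau g (t,x)⟫ • jtau g (t,x)
  unfold jtau
  rw [sub_eq_add_neg, ← neg_smul]
  rw [real_inner_smul_left, real_inner_smul_right, smul_smul]
  congr 1
  rw [real_inner_comm]
  ring

end TwoVar

section OneVar

variable {n : ℕ} (c : ℝ → EuclideanSpace ℝ (Fin n))

lemma contDiff_deriv_curve {F : Type*} [NormedAddCommGroup F] [NormedSpace ℝ F]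
    {ψ : ℝ → F} (hψ : ContDiff ℝ (⊤ : ℕ∞) ψ) : ContDiff ℝ (⊤ : ℕ∞) (deriv ψ) :=
  (hψ.fderiv_right (by simp)).clm_apply contDiff_const

lemma nablaS_eq_of_deriv {ψ : ℝ → EuclideanSpace ℝ (Fin n)} {x : ℝ}
    {d : EuclideanSpace ℝ (Fin n)} (h : deriv ψ x = d) :
    nablaS c ψ x = ‖deriv c x‖⁻¹ • d
      - ⟪‖deriv c x‖⁻¹ • d, tau c x⟫ • tau c x := by
  unfold nablaS sDeriv; rw [h]

lemma nablaS_congr_deriv {ψ₁ ψ₂ : ℝ → EuclideanSpace ℝ (Fin n)} {x : ℝ}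
    (h : deriv ψ₁ x = deriv ψ₂ x) : nablaS c ψ₁ x = nablaS c ψ₂ x := by
  unfold nablaS sDeriv; rw [h]

lemma nablaS_eventuallyEq {ψ₁ ψ₂ : ℝ → EuclideanSpace ℝ (Fin n)} {x : ℝ}
    (h : ψ₁ =ᶠ[nhds x] ψ₂) : nablaS c ψ₁ x = nablaS c ψ₂ x :=
  nablaS_congr_deriv c h.deriv_eq

lemma nablaS_zero_of_deriv {ψ : ℝ → EuclideanSpace ℝ (Fin n)} {x : ℝ}
    (h : deriv ψ x = 0) : nablaS c ψ x = 0 := by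
  rw [nablaS_eq_of_deriv c h]; simp

lemma tau_contDiffAt (hc : ContDiff ℝ (⊤ : ℕ∞) c) {x : ℝ} (hx : deriv c x ≠ 0) :
    ContDiffAt ℝ (⊤ : ℕ∞) (tau c) x :=
  (((contDiff_deriv_curve hc).contDiffAt.norm ℝ hx).inv
    (norm_ne_zero_iff.2 hx)).smul (contDiff_deriv_curve hc).contDiffAt

lemma sDeriv_contDiffAt (hc : ContDiff ℝ (⊤ : ℕ∞) c) {x : ℝ} (hx : deriv c x ≠ 0)
    {ψ : ℝ → EuclideanSpace ℝ (Fin n)} (hψ : ContDiffAt ℝ (⊤ : ℕ∞) ψ x) :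
    ContDiffAt ℝ (⊤ : ℕ∞) (sDeriv c ψ) x :=
  (((contDiff_deriv_curve hc).contDiffAt.norm ℝ hx).inv
    (norm_ne_zero_iff.2 hx)).smul (contDiffAt_deriv hψ)

lemma kappa_contDiffAt (hc : ContDiff ℝ (⊤ : ℕ∞) c) {x : ℝ} (hx : deriv c x ≠ 0) :
    ContDiffAt ℝ (⊤ : ℕ∞) (kappa c) x :=
  sDeriv_contDiffAt c hc hx (tau_contDiffAt c hc hx)

lemma nablaS_contDiffAt (hc : ContDiff ℝ (⊤ : ℕ∞) c) {x : ℝ} (hx : deriv c x ≠ 0)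
    {ψ : ℝ → EuclideanSpace ℝ (Fin n)} (hψ : ContDiffAt ℝ (⊤ : ℕ∞) ψ x) :
    ContDiffAt ℝ (⊤ : ℕ∞) (nablaS c ψ) x := by
  have hτ := tau_contDiffAt c hc hx
  have hsd := sDeriv_contDiffAt c hc hx hψ
  exact hsd.sub ((hsd.inner ℝ hτ).smul hτ)

lemma inner_tau_tau {x : ℝ} (hx : deriv c x ≠ 0) : ⟪tau c x, tau c x⟫ = 1 := by
  show ⟪‖deriv c x‖⁻¹ • deriv c x, ‖deriv c x‖⁻¹ • deriv c x⟫ = 1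
  rw [real_inner_smul_left, real_inner_smul_right, real_inner_self_eq_norm_sq]
  have h1 : ‖deriv c x‖ ≠ 0 := norm_ne_zero_iff.2 hx
  field_simp

lemma deriv_tau_eq {x : ℝ} (hx : deriv c x ≠ 0) :
    deriv (tau c) x = ‖deriv c x‖ • kappa c x := by
  show _ = ‖deriv c x‖ • (‖deriv c x‖⁻¹ • deriv (tau c) x)
  rw [smul_smul, mul_inv_cancel₀ (norm_ne_zero_iff.2 hx), one_smul]

lemma inner_kappa_tau (hc : ContDiff ℝ (⊤ : ℕ∞) c) {x : ℝ}
    (hev : ∀ᶠ y in nhds x, deriv c y ≠ 0) : ⟪kappa c x, tau c x⟫ = 0 := by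
  have hx : deriv c x ≠ 0 := hev.self_of_nhds
  have hτd : DifferentiableAt ℝ (tau c) x :=
    (tau_contDiffAt c hc hx).differentiableAt (by simp)
  have h1 : (fun y => (⟪tau c y, tau c y⟫ : ℝ)) =ᶠ[nhds x] fun _ => (1 : ℝ) :=
    hev.mono fun y hy => inner_tau_tau c hy
  have h2 : deriv (fun y => (⟪tau c y, tau c y⟫ : ℝ)) x = 0 := by
    rw [h1.deriv_eq]; simp
  rw [deriv_inner_apply ℝ hτd hτd] at h2
  have h3 : ⟪deriv (tau c) x, tau c x⟫ = 0 := by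
    rw [real_inner_comm] at h2; linarith
  show ⟪‖deriv c x‖⁻¹ • deriv (tau c) x, tau c x⟫ = 0
  rw [real_inner_smul_left, h3, mul_zero]

lemma nablaS_add {ψ₁ ψ₂ : ℝ → EuclideanSpace ℝ (Fin n)} {x : ℝ}
    (h₁ : DifferentiableAt ℝ ψ₁ x) (h₂ : DifferentiableAt ℝ ψ₂ x) :
    nablaS c (fun y => ψ₁ y + ψ₂ y) x = nablaS c ψ₁ x + nablaS c ψ₂ x := by
  unfold nablaS sDeriv
  rw [deriv_fun_add h₁ h₂]
  simp only [smul_add, inner_add_left, add_smul]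
  module

lemma nablaS_sub {ψ₁ ψ₂ : ℝ → EuclideanSpace ℝ (Fin n)} {x : ℝ}
    (h₁ : DifferentiableAt ℝ ψ₁ x) (h₂ : DifferentiableAt ℝ ψ₂ x) :
    nablaS c (fun y => ψ₁ y - ψ₂ y) x = nablaS c ψ₁ x - nablaS c ψ₂ x := by
  unfold nablaS sDeriv
  rw [deriv_fun_sub h₁ h₂]
  simp only [smul_sub, inner_sub_left, sub_smul]
  module

lemma nablaS_neg {ψ : ℝ → EuclideanSpace ℝ (Fin n)} {x : ℝ} :
    nablaS c (fun y => -ψ y) x = -nablaS c ψ x := by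
  unfold nablaS sDeriv
  rw [deriv.fun_neg]
  simp only [smul_neg, inner_neg_left, neg_smul]
  module

lemma nablaS_const_smul {ψ : ℝ → EuclideanSpace ℝ (Fin n)} {x : ℝ} (a : ℝ)
    (h : DifferentiableAt ℝ ψ x) :
    nablaS c (fun y => a • ψ y) x = a • nablaS c ψ x := by
  unfold nablaS sDeriv
  rw [deriv_fun_const_smul a h]
  simp only [smul_smul, real_inner_smul_left, mul_comm]
  module

lemma nablaS_smul_orth {a : ℝ → ℝ} {ψ : ℝ → EuclideanSpace ℝ (Fin n)} {x : ℝ}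
    (ha : DifferentiableAt ℝ a x) (hψ : DifferentiableAt ℝ ψ x)
    (hor : ⟪ψ x, tau c x⟫ = 0) :
    nablaS c (fun y => a y • ψ y) x
      = (‖deriv c x‖⁻¹ * deriv a x) • ψ x + a x • nablaS c ψ x := by
  have hd : deriv (fun y => a y • ψ y) x = a x • deriv ψ x + deriv a x • ψ x :=
    (ha.hasDerivAt.smul hψ.hasDerivAt).deriv
  unfold nablaS sDeriv
  rw [hd]
  simp only [smul_add, smul_smul, inner_add_left, real_inner_smul_left, hor, mul_zero,
    add_zero, add_smul, smul_sub, sub_smul]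
  match_scalars <;> ring

lemma nablaS_smul_zero {a : ℝ → ℝ} {ψ : ℝ → EuclideanSpace ℝ (Fin n)} {x : ℝ}
    (ha : DifferentiableAt ℝ a x) (hψ : DifferentiableAt ℝ ψ x)
    (ha0 : a x = 0) (hda : deriv a x = 0) :
    nablaS c (fun y => a y • ψ y) x = 0 := by
  have hd : deriv (fun y => a y • ψ y) x = 0 := by
    rw [(ha.hasDerivAt.fun_smul hψ.hasDerivAt).deriv, ha0, hda]
    simp
  exact nablaS_zero_of_deriv c hd

lemma nablaS_phi_tau (hc : ContDiff ℝ (⊤ : ℕ∞) c) {φ₀ : ℝ → ℝ} {x : ℝ}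
    (hφ : DifferentiableAt ℝ φ₀ x) (hev : ∀ᶠ y in nhds x, deriv c y ≠ 0) :
    nablaS c (fun y => φ₀ y • tau c y) x = φ₀ x • kappa c x := by
  have hx : deriv c x ≠ 0 := hev.self_of_nhds
  have hτd : DifferentiableAt ℝ (tau c) x :=
    (tau_contDiffAt c hc hx).differentiableAt (by simp)
  have hd : deriv (fun y => φ₀ y • tau c y) x
      = φ₀ x • deriv (tau c) x + deriv φ₀ x • tau c x :=
    (hφ.hasDerivAt.smul hτd.hasDerivAt).deriv
  unfold nablaS sDeriv
  rw [hd, deriv_tau_eq c hx]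
  have h1 : ‖deriv c x‖ ≠ 0 := norm_ne_zero_iff.2 hx
  have hγ : ‖deriv c x‖⁻¹ * ‖deriv c x‖ = 1 := inv_mul_cancel₀ h1
  have hκτ : ⟪kappa c x, tau c x⟫ = 0 := inner_kappa_tau c hc hev
  have hττ : ⟪tau c x, tau c x⟫ = 1 := inner_tau_tau c hx
  simp only [smul_add, smul_smul, inner_add_left, real_inner_smul_left, hκτ, hττ,
    mul_zero, mul_one, add_zero, zero_add, add_smul, smul_sub, sub_smul]
  match_scalars <;> field_simp <;> ring

end OneVar

section FinalAlg

lemma final_alg {n : ℕ} (c : ℝ → EuclideanSpace ℝ (Fin n)) (φ₀ : ℝ → ℝ) (lam : ℝ)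
    (hc : ContDiff ℝ (⊤ : ℕ∞) c) (hφ₀ : ContDiff ℝ (⊤ : ℕ∞) φ₀)
    (S : Set ℝ) (hS : IsOpen S) (h0S : (0 : ℝ) ∈ S)
    (hreg : ∀ x ∈ S, deriv c x ≠ 0)
    (hκ0 : kappa c 0 = 0)
    (hV : deriv (nablaS c (fun x =>
        -nablaS c (nablaS c (kappa c)) x
        - ((1 / 2 : ℝ) * ‖kappa c x‖ ^ 2) • kappa c x
        + lam • kappa c x + φ₀ x • tau c x)) 0 = 0) :
    nablaSIter c 4 (kappa c) 0
      = lam • nablaSIter c 2 (kappa c) 0 + φ₀ 0 • nablaS c (kappa c) 0 := by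
  have hev : ∀ x ∈ S, ∀ᶠ y in nhds x, deriv c y ≠ 0 := fun x hx =>
    Filter.eventually_of_mem (hS.mem_nhds hx) hreg
  have hx0 : deriv c 0 ≠ 0 := hreg 0 h0S
  -- smoothness chain
  have hκSm : ∀ x ∈ S, ContDiffAt ℝ (⊤ : ℕ∞) (kappa c) x := fun x hx =>
    kappa_contDiffAt c hc (hreg x hx)
  have hNκSm : ∀ x ∈ S, ContDiffAt ℝ (⊤ : ℕ∞) (nablaS c (kappa c)) x := fun x hx =>
    nablaS_contDiffAt c hc (hreg x hx) (hκSm x hx)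
  have hN2κSm : ∀ x ∈ S, ContDiffAt ℝ (⊤ : ℕ∞) (nablaS c (nablaS c (kappa c))) x :=
    fun x hx => nablaS_contDiffAt c hc (hreg x hx) (hNκSm x hx)
  have hN3κSm : ∀ x ∈ S,
      ContDiffAt ℝ (⊤ : ℕ∞) (nablaS c (nablaS c (nablaS c (kappa c)))) x :=
    fun x hx => nablaS_contDiffAt c hc (hreg x hx) (hN2κSm x hx)
  have hτSm : ∀ x ∈ S, ContDiffAt ℝ (⊤ : ℕ∞) (tau c) x := fun x hx =>
    tau_contDiffAt c hc (hreg x hx)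
  have hbSm : ∀ x ∈ S,
      ContDiffAt ℝ (⊤ : ℕ∞) (fun y => (1 / 2 : ℝ) * ‖kappa c y‖ ^ 2) x := fun x hx =>
    contDiffAt_const.mul ((hκSm x hx).norm_sq ℝ)
  have hφd : ∀ x : ℝ, DifferentiableAt ℝ φ₀ x := fun x =>
    hφ₀.differentiable (by simp) x
  -- differentiability of pieces on S
  have dκ : ∀ x ∈ S, DifferentiableAt ℝ (kappa c) x := fun x hx =>
    (hκSm x hx).differentiableAt (by simp)
  have dNκ : ∀ x ∈ S, DifferentiableAt ℝ (nablaS c (kappa c)) x := fun x hx =>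
    (hNκSm x hx).differentiableAt (by simp)
  have dN2κ : ∀ x ∈ S, DifferentiableAt ℝ (nablaS c (nablaS c (kappa c))) x :=
    fun x hx => (hN2κSm x hx).differentiableAt (by simp)
  have dτ : ∀ x ∈ S, DifferentiableAt ℝ (tau c) x := fun x hx =>
    (hτSm x hx).differentiableAt (by simp)
  have db : ∀ x ∈ S, DifferentiableAt ℝ (fun y => (1 / 2 : ℝ) * ‖kappa c y‖ ^ 2) x :=
    fun x hx => (hbSm x hx).differentiableAt (by simp)
  -- expansion of nablaS V on S
  have hNVeq : ∀ x ∈ S,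
      nablaS c (fun y =>
        -nablaS c (nablaS c (kappa c)) y
        - ((1 / 2 : ℝ) * ‖kappa c y‖ ^ 2) • kappa c y
        + lam • kappa c y + φ₀ y • tau c y) x
      = -nablaS c (nablaS c (nablaS c (kappa c))) x
        - ((‖deriv c x‖⁻¹ * deriv (fun y => (1 / 2 : ℝ) * ‖kappa c y‖ ^ 2) x)
            • kappa c x
           + ((1 / 2 : ℝ) * ‖kappa c x‖ ^ 2) • nablaS c (kappa c) x)
        + lam • nablaS c (kappa c) x + φ₀ x • kappa c x := by
    intro x hx
    have d1 : DifferentiableAt ℝ (fun y => -nablaS c (nablaS c (kappa c)) y) x :=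
      (dN2κ x hx).neg
    have d2 : DifferentiableAt ℝ
        (fun y => ((1 / 2 : ℝ) * ‖kappa c y‖ ^ 2) • kappa c y) x :=
      (db x hx).smul (dκ x hx)
    have d12 := d1.fun_sub d2
    have d3 : DifferentiableAt ℝ (fun y => lam • kappa c y) x :=
      (dκ x hx).const_smul lam
    have d123 := d12.fun_add d3
    have d4 : DifferentiableAt ℝ (fun y => φ₀ y • tau c y) x :=
      (hφd x).smul (dτ x hx)
    rw [nablaS_add c d123 d4, nablaS_add c d12 d3, nablaS_sub c d1 d2,
      nablaS_neg c, nablaS_const_smul c lam (dκ x hx),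
      nablaS_phi_tau c hc (hφd x) (hev x hx),
      nablaS_smul_orth c (db x hx) (dκ x hx) (inner_kappa_tau c hc (hev x hx))]
  -- derivative of b at 0 vanishes
  have hdb0 : deriv (fun y => (1 / 2 : ℝ) * ‖kappa c y‖ ^ 2) 0 = 0 := by
    have h1 : HasDerivAt (fun y => ‖kappa c y‖ ^ 2)
        (2 * ⟪kappa c 0, deriv (kappa c) 0⟫) 0 := (dκ 0 h0S).hasDerivAt.norm_sq
    have h2 := (h1.const_mul (1 / 2 : ℝ)).deriv
    rw [h2, hκ0]
    simp
  have hb0 : (1 / 2 : ℝ) * ‖kappa c 0‖ ^ 2 = 0 := by rw [hκ0]; simp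
  -- the function W
  have hNW : nablaS c (fun y =>
        -nablaS c (nablaS c (kappa c)) y
        - ((1 / 2 : ℝ) * ‖kappa c y‖ ^ 2) • kappa c y
        + lam • kappa c y + φ₀ y • tau c y)
      =ᶠ[nhds 0] fun x =>
        -nablaS c (nablaS c (nablaS c (kappa c))) x
        - ((‖deriv c x‖⁻¹ * deriv (fun y => (1 / 2 : ℝ) * ‖kappa c y‖ ^ 2) x)
            • kappa c x
           + ((1 / 2 : ℝ) * ‖kappa c x‖ ^ 2) • nablaS c (kappa c) x)
        + lam • nablaS c (kappa c) x + φ₀ x • kappa c x :=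
    Filter.eventually_of_mem (hS.mem_nhds h0S) (fun x hx => hNVeq x hx)
  -- nablaS of nablaS V at 0 vanishes
  have hNNV : nablaS c (nablaS c (fun y =>
        -nablaS c (nablaS c (kappa c)) y
        - ((1 / 2 : ℝ) * ‖kappa c y‖ ^ 2) • kappa c y
        + lam • kappa c y + φ₀ y • tau c y)) 0 = 0 := nablaS_zero_of_deriv c hV
  rw [nablaS_eventuallyEq c hNW] at hNNV
  -- now expand the W-side at 0
  have da1 : DifferentiableAt ℝ
      (fun x => ‖deriv c x‖⁻¹ * deriv (fun y => (1 / 2 : ℝ) * ‖kappa c y‖ ^ 2) x) 0 := by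
    have h1 : ContDiffAt ℝ (⊤ : ℕ∞) (fun x => ‖deriv c x‖⁻¹) 0 :=
      ((contDiff_deriv_curve hc).contDiffAt.norm ℝ hx0).inv (norm_ne_zero_iff.2 hx0)
    have h2 : ContDiffAt ℝ (⊤ : ℕ∞)
        (deriv (fun y => (1 / 2 : ℝ) * ‖kappa c y‖ ^ 2)) 0 :=
      contDiffAt_deriv (hbSm 0 h0S)
    exact (h1.mul h2).differentiableAt (by simp)
  have e1 : DifferentiableAt ℝ
      (fun y => -nablaS c (nablaS c (nablaS c (kappa c))) y) 0 :=
    ((hN3κSm 0 h0S).differentiableAt (by simp)).neg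
  have e2 : DifferentiableAt ℝ (fun x =>
      (‖deriv c x‖⁻¹ * deriv (fun y => (1 / 2 : ℝ) * ‖kappa c y‖ ^ 2) x) • kappa c x
      + ((1 / 2 : ℝ) * ‖kappa c x‖ ^ 2) • nablaS c (kappa c) x) 0 :=
    (da1.smul (dκ 0 h0S)).add ((db 0 h0S).smul (dNκ 0 h0S))
  have e12 := e1.fun_sub e2
  have e3 : DifferentiableAt ℝ (fun y => lam • nablaS c (kappa c) y) 0 :=
    (dNκ 0 h0S).const_smul lam
  have e123 := e12.fun_add e3
  have e4 : DifferentiableAt ℝ (fun y => φ₀ y • kappa c y) 0 :=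
    (hφd 0).smul (dκ 0 h0S)
  have horκ : ⟪kappa c 0, tau c 0⟫ = 0 := by rw [hκ0]; simp
  have hsplit2 : nablaS c (fun x =>
      (‖deriv c x‖⁻¹ * deriv (fun y => (1 / 2 : ℝ) * ‖kappa c y‖ ^ 2) x) • kappa c x
      + ((1 / 2 : ℝ) * ‖kappa c x‖ ^ 2) • nablaS c (kappa c) x) 0 = 0 := by
    rw [nablaS_add c (da1.fun_smul (dκ 0 h0S)) ((db 0 h0S).fun_smul (dNκ 0 h0S)),
      nablaS_smul_orth c da1 (dκ 0 h0S) horκ,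
      nablaS_smul_zero c (db 0 h0S) (dNκ 0 h0S) hb0 hdb0, hdb0, hκ0]
    simp
  rw [nablaS_add c e123 e4, nablaS_add c e12 e3, nablaS_sub c e1 e2, nablaS_neg c,
    nablaS_const_smul c lam (dNκ 0 h0S),
    nablaS_smul_orth c (hφd 0) (dκ 0 h0S) horκ, hsplit2, hκ0] at hNNV
  simp only [smul_zero, add_zero, zero_add, sub_zero, zero_smul] at hNNV
  show nablaS c (nablaS c (nablaS c (nablaS c (kappa c)))) 0
    = lam • nablaS c (nablaS c (kappa c)) 0 + φ₀ 0 • nablaS c (kappa c) 0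
  linear_combination (norm := module) -hNNV

end FinalAlg

section Junction

lemma V_contDiffAt {n : ℕ} (c : ℝ → EuclideanSpace ℝ (Fin n)) (φ₀ : ℝ → ℝ) (lam : ℝ)
    (hc : ContDiff ℝ (⊤ : ℕ∞) c) {x : ℝ} (hφc : ContDiffAt ℝ (⊤ : ℕ∞) φ₀ x)
    (hx : deriv c x ≠ 0) :
    ContDiffAt ℝ (⊤ : ℕ∞) (fun y =>
      -nablaS c (nablaS c (kappa c)) y
      - ((1 / 2 : ℝ) * ‖kappa c y‖ ^ 2) • kappa c y
      + lam • kappa c y + φ₀ y • tau c y) x := by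
  have hκ := kappa_contDiffAt c hc hx
  have hN2 := nablaS_contDiffAt c hc hx (nablaS_contDiffAt c hc hx hκ)
  have hτ := tau_contDiffAt c hc hx
  have hb : ContDiffAt ℝ (⊤ : ℕ∞) (fun y => (1 / 2 : ℝ) * ‖kappa c y‖ ^ 2) x :=
    contDiffAt_const.mul (hκ.norm_sq ℝ)
  exact ((hN2.neg.sub (hb.smul hκ)).add (hκ.const_smul lam)).add (hφc.smul hτ)

theorem junction_key {n : ℕ} (T t₀ lam : ℝ)
    (g : ℝ → ℝ → EuclideanSpace ℝ (Fin n)) (φ : ℝ → ℝ → ℝ)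
    (hg : ContDiff ℝ (⊤ : ℕ∞) (Function.uncurry g))
    (hφ : ContDiff ℝ (⊤ : ℕ∞) (Function.uncurry φ))
    (ht₀ : t₀ ∈ Ioo (0 : ℝ) T)
    (hreg : ∀ t ∈ Ioo (0 : ℝ) T, ∀ x ∈ Icc (0 : ℝ) 1, deriv (g t) x ≠ 0)
    (hflow : ∀ t ∈ Ioo (0 : ℝ) T, ∀ x ∈ Icc (0 : ℝ) 1,
      pT g t x = -nablaS (g t) (nablaS (g t) (kappa (g t))) x
          - ((1 / 2 : ℝ) * ‖kappa (g t) x‖ ^ 2) • kappa (g t) x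
          + lam • kappa (g t) x + φ t x • tau (g t) x)
    (hκz : ∀ t ∈ Ioo (0 : ℝ) T, kappa (g t) 0 = 0) :
    nablaSIter (g t₀) 4 (kappa (g t₀)) 0
      = lam • nablaSIter (g t₀) 2 (kappa (g t₀)) 0
        + φ t₀ 0 • nablaS (g t₀) (kappa (g t₀)) 0 := by
  obtain ⟨ht0, htT⟩ := ht₀
  have hUmem : ∀ t ∈ Ioo (0 : ℝ) T, ∀ x ∈ Icc (0 : ℝ) 1, jvh g (t, x) ≠ 0 := by
    intro t ht x hx
    rw [← deriv_eq_jvh g hg]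
    exact hreg t ht x hx
  have hp0 : jvh g (t₀, 0) ≠ 0 := hUmem t₀ ⟨ht0, htT⟩ 0 (by norm_num)
  have hgt₀ : ContDiff ℝ (⊤ : ℕ∞) (g t₀) := hg.comp (contDiff_const.prodMk contDiff_id)
  have hφt₀ : ContDiff ℝ (⊤ : ℕ∞) (φ t₀) := hφ.comp (contDiff_const.prodMk contDiff_id)
  -- the slice set S
  have hSopen : IsOpen {x : ℝ | jvh g (t₀, x) ≠ 0} :=
    isOpen_ne.preimage ((jvh_contDiff g hg).continuous.comp (Continuous.prodMk_right t₀))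
  have hreg' : ∀ x ∈ {x : ℝ | jvh g (t₀, x) ≠ 0}, deriv (g t₀) x ≠ 0 := by
    intro x hx
    rw [deriv_eq_jvh g hg]
    exact hx
  have hIccS : ∀ x ∈ Icc (0 : ℝ) 1, jvh g (t₀, x) ≠ 0 :=
    fun x hx => hUmem t₀ ⟨ht0, htT⟩ x hx
  -- time derivative of joint curvature vanishes at the junction
  have hkap0 : ∀ t ∈ Ioo (0 : ℝ) T, jkap g (t, 0) = 0 := fun t ht =>
    (kappa_eq_jkap g hg (hUmem t ht 0 (by norm_num))).symm.trans (hκz t ht)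
  have hderivT : deriv (fun t => jkap g (t, 0)) t₀ = 0 := by
    have hev2 : (fun t => jkap g (t, 0)) =ᶠ[nhds t₀]
        fun _ => (0 : EuclideanSpace ℝ (Fin n)) :=
      Filter.eventually_of_mem (Ioo_mem_nhds ht0 htT) fun t ht => hkap0 t ht
    rw [hev2.deriv_eq, deriv_const]
  have hkdAt : DifferentiableAt ℝ (jkap g) (t₀, 0) :=
    (jkap_contDiffAt g hg hp0).differentiableAt (by simp)
  have hfd1 : fderiv ℝ (jkap g) (t₀, 0) (1, 0) = 0 := by
    rw [← (hasDerivAt_fix2 (jkap g) (t₀, 0) hkdAt).deriv]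
    exact hderivT
  have hDtau00 : jD2tau g (t₀, 0) = 0 := by
    have h2 : ‖jvh g (t₀, 0)‖⁻¹ • jD2tau g (t₀, 0) = 0 := hkap0 t₀ ⟨ht0, htT⟩
    exact (smul_eq_zero.1 h2).resolve_left (inv_ne_zero (norm_ne_zero_iff.2 hp0))
  have hfdD2 : fderiv ℝ (jD2tau g) (t₀, 0) (1, 0) = 0 := by
    have hγd : DifferentiableAt ℝ (fun p => ‖jvh g p‖⁻¹) (t₀, 0) :=
      (((jvh_contDiff g hg).contDiffAt.norm ℝ hp0).inv
        (norm_ne_zero_iff.2 hp0)).differentiableAt (by simp)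
    have hDd : DifferentiableAt ℝ (jD2tau g) (t₀, 0) :=
      (jD2tau_contDiffAt g hg hp0).differentiableAt (by simp)
    have hprod := (hγd.hasFDerivAt.fun_smul hDd.hasFDerivAt).fderiv
    have happ : fderiv ℝ (jkap g) (t₀, 0) (1, 0)
        = ‖jvh g (t₀, 0)‖⁻¹ • fderiv ℝ (jD2tau g) (t₀, 0) (1, 0)
          + (fderiv ℝ (fun p => ‖jvh g p‖⁻¹) (t₀, 0) (1, 0)) • jD2tau g (t₀, 0) := by
      show fderiv ℝ (fun p => ‖jvh g p‖⁻¹ • jD2tau g p) (t₀, 0) (1, 0) = _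
      rw [hprod]
      simp
    rw [hfd1, hDtau00, smul_zero, add_zero] at happ
    exact (smul_eq_zero.1 happ.symm).resolve_left
      (inv_ne_zero (norm_ne_zero_iff.2 hp0))
  -- Schwarz symmetry for jtau
  have hswap : fderiv ℝ (jD1tau g) (t₀, 0) (0, 1) = 0 := by
    have hs := fderiv_swap (jtau_contDiffAt g hg hp0) (0, 1) (1, 0)
    rw [show jD1tau g = fun q => fderiv ℝ (jtau g) q (1, 0) from rfl, hs,
      show (fun q => fderiv ℝ (jtau g) q (0, 1)) = jD2tau g from rfl]
    exact hfdD2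
  have h7 : deriv (fun x => jD1tau g (t₀, x)) 0 = 0 := by
    rw [show deriv (fun x => jD1tau g (t₀, x)) 0 = fderiv ℝ (jD1tau g) (t₀, 0) (0, 1) from
      (hasDerivAt_fix1 (jD1tau g) (t₀, 0)
        ((jD1tau_contDiffAt g hg hp0).differentiableAt (by simp))).deriv]
    exact hswap
  -- identify the slice with nablaS of the velocity
  have hNPT0 : deriv (nablaS (g t₀) (pT g t₀)) 0 = 0 := by
    have hev3 : (fun x => jD1tau g (t₀, x)) =ᶠ[nhds 0] nablaS (g t₀) (pT g t₀) :=
      Filter.eventually_of_mem (hSopen.mem_nhds hp0) fun x hx => jD1tau_eq g hg hx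
    rw [← hev3.deriv_eq]
    exact h7
  -- substitution of the flow equation on Icc
  have hPTeq : pT g t₀ = fun y => fderiv ℝ (Function.uncurry g) (t₀, y) (1, 0) :=
    funext fun y => pT_eq g hg t₀ y
  have hPTsm : ContDiff ℝ (⊤ : ℕ∞) (pT g t₀) := by
    rw [hPTeq]
    exact ((hg.fderiv_right (by simp)).clm_apply contDiff_const).comp
      (contDiff_const.prodMk contDiff_id)
  have hEqOnPV : EqOn (pT g t₀) (fun y =>
      -nablaS (g t₀) (nablaS (g t₀) (kappa (g t₀))) y
      - ((1 / 2 : ℝ) * ‖kappa (g t₀) y‖ ^ 2) • kappa (g t₀) y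
      + lam • kappa (g t₀) y + φ t₀ y • tau (g t₀) y) (Icc 0 1) :=
    fun x hx => hflow t₀ ⟨ht0, htT⟩ x hx
  have hdPV : ∀ x ∈ Icc (0 : ℝ) 1, deriv (pT g t₀) x = deriv (fun y =>
      -nablaS (g t₀) (nablaS (g t₀) (kappa (g t₀))) y
      - ((1 / 2 : ℝ) * ‖kappa (g t₀) y‖ ^ 2) • kappa (g t₀) y
      + lam • kappa (g t₀) y + φ t₀ y • tau (g t₀) y) x :=
    deriv_eqOn_Icc hEqOnPV (fun x _ => (hPTsm.differentiable (by simp)) x)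
      (fun x hx => (V_contDiffAt (g t₀) (φ t₀) lam hgt₀ hφt₀.contDiffAt
        (hreg' x (hIccS x hx))).differentiableAt (by simp))
  have hNPV : EqOn (nablaS (g t₀) (pT g t₀)) (nablaS (g t₀) (fun y =>
      -nablaS (g t₀) (nablaS (g t₀) (kappa (g t₀))) y
      - ((1 / 2 : ℝ) * ‖kappa (g t₀) y‖ ^ 2) • kappa (g t₀) y
      + lam • kappa (g t₀) y + φ t₀ y • tau (g t₀) y)) (Icc 0 1) :=
    fun x hx => nablaS_congr_deriv (g t₀) (hdPV x hx)
  have hNdiffP : ∀ x ∈ Icc (0 : ℝ) 1,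
      DifferentiableAt ℝ (nablaS (g t₀) (pT g t₀)) x := by
    intro x hx
    have hev4 : (fun y => jD1tau g (t₀, y)) =ᶠ[nhds x] nablaS (g t₀) (pT g t₀) :=
      Filter.eventually_of_mem (hSopen.mem_nhds (hIccS x hx))
        fun y hy => jD1tau_eq g hg hy
    have hdiff : DifferentiableAt ℝ (fun y => jD1tau g (t₀, y)) x :=
      (((jD1tau_contDiffAt g hg (hIccS x hx)).comp x
        (contDiffAt_const.prodMk contDiffAt_id)).differentiableAt (by simp))
    exact hev4.differentiableAt_iff.1 hdiff
  have hNdiffV : ∀ x ∈ Icc (0 : ℝ) 1, DifferentiableAt ℝ (nablaS (g t₀) (fun y =>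
      -nablaS (g t₀) (nablaS (g t₀) (kappa (g t₀))) y
      - ((1 / 2 : ℝ) * ‖kappa (g t₀) y‖ ^ 2) • kappa (g t₀) y
      + lam • kappa (g t₀) y + φ t₀ y • tau (g t₀) y)) x := fun x hx =>
    (nablaS_contDiffAt (g t₀) hgt₀ (hreg' x (hIccS x hx))
      (V_contDiffAt (g t₀) (φ t₀) lam hgt₀ hφt₀.contDiffAt
        (hreg' x (hIccS x hx)))).differentiableAt (by simp)
  have hdNV0 : deriv (nablaS (g t₀) (fun y =>
      -nablaS (g t₀) (nablaS (g t₀) (kappa (g t₀))) y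
      - ((1 / 2 : ℝ) * ‖kappa (g t₀) y‖ ^ 2) • kappa (g t₀) y
      + lam • kappa (g t₀) y + φ t₀ y • tau (g t₀) y)) 0 = 0 := by
    rw [← deriv_eqOn_Icc hNPV hNdiffP hNdiffV 0 (by norm_num)]
    exact hNPT0
  exact final_alg (g t₀) (φ t₀) lam hgt₀ hφt₀ {x : ℝ | jvh g (t₀, x) ≠ 0}
    hSopen hp0 hreg' (hκz t₀ ⟨ht0, htT⟩) hdNV0

end Junction

/-- At the triple junction of the elastic network flow:
`∇ₛ⁴κᵢ(t,0) = λᵢ ∇ₛ²κᵢ(t,0) + φᵢ(t,0) ∇ₛκᵢ(t,0)`. -/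
theorem fourth_derivative_at_junction {n : ℕ} (hn : 2 ≤ n) (T : ℝ) (hT : 0 < T)
    (P : Fin 3 → EuclideanSpace ℝ (Fin n)) (hP : Function.Injective P)
    (lam : Fin 3 → ℝ)
    (f : Fin 3 → ℝ → ℝ → EuclideanSpace ℝ (Fin n)) (φ : Fin 3 → ℝ → ℝ → ℝ)
    (hf : ∀ i, ContDiff ℝ (⊤ : ℕ∞) (Function.uncurry (f i)))
    (hφ : ∀ i, ContDiff ℝ (⊤ : ℕ∞) (Function.uncurry (φ i)))
    (hreg : ∀ i, ∀ t ∈ Ioo (0 : ℝ) T, ∀ x ∈ Icc (0 : ℝ) 1, deriv (f i t) x ≠ 0)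
    (hflow : ∀ i, ∀ t ∈ Ioo (0 : ℝ) T, ∀ x ∈ Icc (0 : ℝ) 1,
      pT (f i) t x
        = -nablaS (f i t) (nablaS (f i t) (kappa (f i t))) x
          - ((1 / 2 : ℝ) * ‖kappa (f i t) x‖ ^ 2) • kappa (f i t) x
          + lam i • kappa (f i t) x
          + φ i t x • tau (f i t) x)
    (hfix : ∀ i, ∀ t ∈ Ioo (0 : ℝ) T, f i t 1 = P i)
    (hcurv : ∀ i, ∀ t ∈ Ioo (0 : ℝ) T,
      kappa (f i t) 0 = 0 ∧ kappa (f i t) 1 = 0)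
    (hconc : ∀ i j, ∀ t ∈ Ioo (0 : ℝ) T, f i t 0 = f j t 0)
    (hnat : ∀ t ∈ Ioo (0 : ℝ) T,
      ∑ i : Fin 3, (nablaS (f i t) (kappa (f i t)) 0 - lam i • tau (f i t) 0) = 0) :
    ∀ t ∈ Ioo (0 : ℝ) T, ∀ i : Fin 3,
      nablaSIter (f i t) 4 (kappa (f i t)) 0
        = lam i • nablaSIter (f i t) 2 (kappa (f i t)) 0
          + φ i t 0 • nablaS (f i t) (kappa (f i t)) 0 := by
  intro t ht i
  exact junction_key T t (lam i) (f i) (φ i) (hf i) (hφ i) ht (hreg i) (hflow i)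
    (fun s hs => (hcurv i s hs).1)
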